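/- Let Q be a unital quantale with unit e whose underlying lattice is meet-continuous, i.e. for every α ∈ Q and every nonempty directed set D ⊆ Q one has α ⊓ sSup D = ⨆ d ∈ D, (α ⊓ d). Assume Q is unitally nondistributive, i.e. e ≤ sSup {β | β ◁ e} and there exists A ⊆ Q with e ⊓ sSup A ≰ ⨆ a ∈ A, (e ⊓ a). Then there exist α, β ∈ Q such that e ⊓ (α ⊔ β) ≰ (e ⊓ α) ⊔ (e ⊓ β) and e ≰ α ⊔ β; in particular the underlying lattice of Q is strictly nondistributive. -/
import Mathlib


/-- In a unitally nondistributive unital quantale with unit `e` whose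
underlying lattice is meet-continuous, there are `α, β` with
`e ⊓ (α ⊔ β) ≰ (e ⊓ α) ⊔ (e ⊓ β)` and `e ≰ α ⊔ β`; in particular the underlying
lattice is strictly nondistributive. -/
theorem stmt_7 {Q : Type*} [CompleteLattice Q] (mul : Q → Q → Q)
    (hassoc : ∀ a b c : Q, mul (mul a b) c = mul a (mul b c))
    (hsSup_left : ∀ (A : Set Q) (b : Q), mul (sSup A) b = ⨆ a ∈ A, mul a b)
    (hsSup_right : ∀ (A : Set Q) (b : Q), mul b (sSup A) = ⨆ a ∈ A, mul b a)
    (e : Q) (he_left : ∀ a : Q, mul e a = a) (he_right : ∀ a : Q, mul a e = a)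
    (hmeet_cont : ∀ (α : Q) (D : Set Q), D.Nonempty → DirectedOn (· ≤ ·) D →
      α ⊓ sSup D = ⨆ d ∈ D, α ⊓ d)
    (he_approx : e ≤ sSup {β : Q | ∀ A : Set Q, e ≤ sSup A → ∃ c ∈ A, β ≤ c})
    (hnd : ∃ A : Set Q, ¬ e ⊓ sSup A ≤ ⨆ a ∈ A, e ⊓ a) :
    ∃ α β : Q, ¬ e ⊓ (α ⊔ β) ≤ (e ⊓ α) ⊔ (e ⊓ β) ∧ ¬ e ≤ α ⊔ β := by
  classical
  -- Key fact: if `e ≤ x ⊔ y` then binary distributivity at `e` holds for `x, y`.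
  have hkey : ∀ x y : Q, e ≤ x ⊔ y → e ⊓ (x ⊔ y) ≤ (e ⊓ x) ⊔ (e ⊓ y) := by
    intro x y hxy
    have he' : e ≤ (e ⊓ x) ⊔ (e ⊓ y) := by
      refine he_approx.trans (sSup_le ?_)
      intro γ hγ
      have hγe : γ ≤ e := by
        obtain ⟨c, hc, hγc⟩ := hγ {e} (by simp)
        simp only [Set.mem_singleton_iff] at hc
        exact hc ▸ hγc
      obtain ⟨c, hc, hγc⟩ := hγ {x, y} (by simpa using hxy)
      rcases hc with rfl | rfl
      · exact le_sup_of_le_left (le_inf hγe hγc)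
      · exact le_sup_of_le_right (le_inf hγe hγc)
    exact le_trans inf_le_left he'
  -- Find a failing binary pair.
  obtain ⟨A, hA⟩ := hnd
  have hfail : ∃ x y : Q, ¬ e ⊓ (x ⊔ y) ≤ (e ⊓ x) ⊔ (e ⊓ y) := by
    by_contra hbin
    push_neg at hbin
    -- finite distributivity
    have hfin : ∀ F : Finset Q, e ⊓ sSup (↑F : Set Q) ≤ ⨆ a ∈ (↑F : Set Q), e ⊓ a := by
      intro F
      induction F using Finset.induction_on with
      | empty => simp
      | @insert a F ha ih =>
        have h1 : sSup (↑(insert a F) : Set Q) = a ⊔ sSup (↑F : Set Q) := by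
          simp [sSup_insert]
        rw [h1]
        refine (hbin a (sSup (↑F : Set Q))).trans ?_
        apply sup_le
        · exact le_biSup (fun b => e ⊓ b) (by simp)
        · refine ih.trans ?_
          refine iSup₂_le fun b hb => ?_
          exact le_biSup (fun b => e ⊓ b) (by simp [Finset.mem_coe.mp hb])
    -- A is nonempty
    have hAne : A.Nonempty := by
      rcases Set.eq_empty_or_nonempty A with rfl | h
      · simp at hA
      · exact h
    -- directed set of finite sups
    set D : Set Q := {d | ∃ F : Finset Q, (↑F : Set Q) ⊆ A ∧ F.Nonempty ∧ d = sSup ↑F} with hD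
    have hDne : D.Nonempty := by
      obtain ⟨a, ha⟩ := hAne
      exact ⟨sSup (↑({a} : Finset Q) : Set Q), ⟨{a}, by simpa using ha, ⟨a, by simp⟩, rfl⟩⟩
    have hDdir : DirectedOn (· ≤ ·) D := by
      rintro _ ⟨F, hF, hFne, rfl⟩ _ ⟨G, hG, hGne, rfl⟩
      refine ⟨sSup (↑(F ∪ G) : Set Q), ⟨F ∪ G, ?_, hFne.mono Finset.subset_union_left, rfl⟩, ?_, ?_⟩
      · intro x hx
        rcases Finset.mem_union.mp (Finset.mem_coe.mp hx) with h | h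
        · exact hF (Finset.mem_coe.mpr h)
        · exact hG (Finset.mem_coe.mpr h)
      · exact sSup_le_sSup (by intro x hx; simp_all)
      · exact sSup_le_sSup (by intro x hx; simp_all)
    have hsSupD : sSup D = sSup A := by
      apply le_antisymm
      · refine sSup_le ?_
        rintro _ ⟨F, hF, _, rfl⟩
        exact sSup_le_sSup hF
      · refine sSup_le fun a ha => ?_
        refine le_sSup_of_le ⟨{a}, by simpa using ha, ⟨a, by simp⟩, rfl⟩ (by simp)
    apply hA
    rw [← hsSupD, hmeet_cont e D hDne hDdir]
    refine iSup₂_le ?_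
    rintro _ ⟨F, hF, _, rfl⟩
    refine (hfin F).trans ?_
    refine iSup₂_le fun b hb => ?_
    exact le_biSup (fun b => e ⊓ b) (hF hb)
  obtain ⟨x, y, hxy⟩ := hfail
  refine ⟨x, y, hxy, fun hle => hxy (hkey x y hle)⟩
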